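/- There exists an infinite non-nilpotent group G such that for every automorphism φ of G, the set {g⁻¹ φ(g) | g ∈ G} is a subgroup of G. -/

import Mathlib

noncomputable section
namespace TwistEx

abbrev K := ℚ_[3]

def Zp : AddSubgroup K where
  carrier := {x | ‖x‖ ≤ 1}
  zero_mem' := by simp
  add_mem' := fun ha hb => le_trans (Padic.nonarchimedean _ _) (max_le ha hb)
  neg_mem' := by intro a ha; simpa using ha

abbrev A := K ⧸ Zp

def qmk : K →+ A := QuotientAddGroup.mk' Zp

lemma mk_surjective : Function.Surjective qmk := QuotientAddGroup.mk'_surjective Zp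

lemma mk_eq_zero {x : K} : qmk x = 0 ↔ ‖x‖ ≤ 1 := by
  rw [qmk, QuotientAddGroup.mk'_apply, QuotientAddGroup.eq_zero_iff]; rfl

lemma norm4 : ‖(4 : K)‖ = 1 := by
  have h1 : ‖((4:ℤ) : K)‖ ≤ 1 := Padic.norm_int_le_one 4
  have h2 : ¬ ‖((4:ℤ) : K)‖ < 1 := by
    rw [Padic.norm_intCast_lt_one_iff]; decide
  push_cast at h1 h2; linarith

lemma norm3 : ‖(3 : K)‖ = (3:ℝ)⁻¹ := by
  have := Padic.norm_p (p := 3)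
  push_cast at this ⊢
  exact this

lemma four_ne : (4 : K) ≠ 0 := by
  intro h
  have := norm4
  rw [h, norm_zero] at this
  norm_num at this

lemma norm_zpow4 (k : ℤ) : ‖(4:K)^k‖ = 1 := by
  rw [norm_zpow, norm4, one_zpow]

/-- multiplication by `4^k` on `A`. -/
def act (k : ℤ) : A →+ A :=
  QuotientAddGroup.map Zp Zp (AddMonoidHom.mulLeft ((4:K)^k)) (by
    intro x hx
    simp only [AddSubgroup.mem_comap]
    show ‖(4:K)^k * x‖ ≤ 1
    rw [norm_mul, norm_zpow4, one_mul]; exact hx)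

@[simp] lemma act_mk (k : ℤ) (x : K) : act k (qmk x) = qmk ((4:K)^k * x) := rfl

lemma act_act (k l : ℤ) (a : A) : act k (act l a) = act (k + l) a := by
  obtain ⟨x, rfl⟩ := mk_surjective a
  simp [act_mk, ← mul_assoc, ← zpow_add₀ four_ne]

@[simp] lemma act_zero_apply (a : A) : act 0 a = a := by
  obtain ⟨x, rfl⟩ := mk_surjective a
  simp

lemma act_one_eq (a : A) : act 1 a = (4:ℤ) • a := by
  obtain ⟨x, rfl⟩ := mk_surjective a
  rw [act_mk, ← map_zsmul]
  norm_num [zsmul_eq_mul]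

lemma act_inj {k : ℤ} {a b : A} (h : act k a = act k b) : a = b := by
  have := congrArg (act (-k)) h
  rwa [act_act, act_act, neg_add_cancel, act_zero_apply, act_zero_apply] at this

-- number theory


lemma binom_aux (z : ℤ) : ∀ t : ℕ, ∃ u : ℤ, (1 + z)^t = 1 + t*z + z^2*u := by
  intro t
  induction t with
  | zero => exact ⟨0, by ring⟩
  | succ t ih =>
      obtain ⟨u, hu⟩ := ih
      refine ⟨u + t + z*u, ?_⟩
      rw [pow_succ, hu]
      push_cast
      ring

lemma four_pow_c : ∀ n : ℕ, ∃ s : ℤ, (4:ℤ)^(3^n) = 1 + 3^(n+1) * s ∧ ¬ (3:ℤ) ∣ s := by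
  intro n
  induction n with
  | zero => exact ⟨1, by norm_num, by decide⟩
  | succ n ih =>
      obtain ⟨s, hs, h3s⟩ := ih
      refine ⟨s + 3^(n+1)*s^2 + 3^(2*n+1)*s^3, ?_, ?_⟩
      · have h1 : (3:ℕ)^(n+1) = 3^n * 3 := by ring
        rw [h1, pow_mul, hs]
        ring
      · intro hdvd
        apply h3s
        have h2 : (3:ℤ) ∣ 3^(n+1)*s^2 + 3^(2*n+1)*s^3 := by
          apply dvd_add <;> exact Dvd.dvd.mul_right (dvd_pow_self 3 (Nat.succ_ne_zero _)) _
        omega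

lemma sq_one_zmod3 : ∀ a : ZMod 3, a ≠ 0 → a^2 = 1 := by decide

lemma key_lemma (N : ℕ) (x : ℤ) (hx : (3:ℤ) ∣ x - 1) :
    ∃ m : ℕ, (3:ℤ)^N ∣ (4:ℤ)^m - x := by
  induction N with
  | zero => exact ⟨0, by simp⟩
  | succ N ih =>
      rcases Nat.eq_zero_or_pos N with rfl | hN
      · exact ⟨0, by simpa using (dvd_neg.2 hx)⟩
      obtain ⟨M, rfl⟩ : ∃ M, N = M + 1 := ⟨N-1, by omega⟩
      clear hN
      obtain ⟨m, hm⟩ := ih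
      obtain ⟨y, hy⟩ := hm
      obtain ⟨s, hs, h3s⟩ := four_pow_c M
      set t : ℕ := ((-(y*s)) % 3).toNat with ht
      obtain ⟨u, hu⟩ := binom_aux ((3:ℤ)^(M+1)*s) t
      have htz : ((t:ℤ)) = (-(y*s)) % 3 :=
        Int.toNat_of_nonneg (Int.emod_nonneg _ (by norm_num))
      have hv : (3:ℤ) ∣ y + x*(t*s) := by
        have h30 : (((3:ℕ)):ℤ) ∣ y + x*(t*s) → (3:ℤ) ∣ y + x*(t*s) := by
          intro h; exact_mod_cast h
        apply h30
        rw [← ZMod.intCast_zmod_eq_zero_iff_dvd]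
        push_cast
        have hx1 : ((x : ZMod 3)) = 1 := by
          have : ((x - 1 : ℤ) : ZMod 3) = 0 := by
            rw [ZMod.intCast_zmod_eq_zero_iff_dvd]; exact_mod_cast hx
          push_cast at this
          linear_combination this
        have hts : ((t:ℕ) : ZMod 3) = -((y:ZMod 3)*(s:ZMod 3)) := by
          have : (((t:ℤ)) : ZMod 3) = ((-(y*s) % 3 : ℤ) : ZMod 3) := by rw [htz]
          rw [show ((3:ℤ)) = ((3:ℕ):ℤ) by norm_num, ZMod.intCast_mod] at this
          push_cast at this ⊢
          rw [this]
        rw [hx1, hts]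
        have hs0 : ((s : ZMod 3)) ≠ 0 := by
          rw [Ne, ZMod.intCast_zmod_eq_zero_iff_dvd]
          intro h; exact h3s (by exact_mod_cast h)
        have := sq_one_zmod3 (s : ZMod 3) hs0
        linear_combination (-(y : ZMod 3)) * this
      obtain ⟨v, hv⟩ := hv
      refine ⟨m + 3^M * t, ?_⟩
      refine ⟨v + 3^M*(x*s^2*u + y*(t:ℤ)*s + 3^(M+1)*y*s^2*u), ?_⟩
      have e1 : (4:ℤ)^(m + 3^M * t) = 4^m * ((4^(3^M)) )^t := by
        rw [pow_add, pow_mul]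
      rw [e1, hs, hu]
      have e2 : (4:ℤ)^m = x + 3^(M+1)*y := by linarith [hy]
      rw [e2]
      push_cast
      linear_combination (3:ℤ)^(M+1) * hv


/-- The group `G = A ⋊ ℤ`. -/
@[ext] structure G : Type where
  a : A
  k : ℤ

namespace G

instance : Group G where
  mul g h := ⟨g.a + act g.k h.a, g.k + h.k⟩
  one := ⟨0, 0⟩
  inv g := ⟨-(act (-g.k) g.a), -g.k⟩
  mul_assoc g h k := by
    ext
    · show g.a + act g.k h.a + act (g.k + h.k) k.a =
        g.a + act g.k (h.a + act h.k k.a)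
      rw [map_add, act_act, add_assoc]
    · show g.k + h.k + k.k = g.k + (h.k + k.k); ring
  one_mul g := by
    ext
    · show (0 : A) + act 0 g.a = g.a
      simp
    · show 0 + g.k = g.k; ring
  mul_one g := by
    ext
    · show g.a + act g.k 0 = g.a
      simp
    · show g.k + 0 = g.k; ring
  inv_mul_cancel g := by
    ext
    · show -(act (-g.k) g.a) + act (-g.k) g.a = (0 : A)
      simp
    · show -g.k + g.k = 0; ring

lemma mul_def (a b : A) (k l : ℤ) :
    (⟨a, k⟩ : G) * (⟨b, l⟩ : G) = ⟨a + act k b, k + l⟩ := rfl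

@[simp] lemma mul_a (g h : G) : (g * h).a = g.a + act g.k h.a := rfl
@[simp] lemma mul_k (g h : G) : (g * h).k = g.k + h.k := rfl
@[simp] lemma inv_a (g : G) : g⁻¹.a = -(act (-g.k) g.a) := rfl
@[simp] lemma inv_k (g : G) : g⁻¹.k = -g.k := rfl
@[simp] lemma one_a : (1 : G).a = 0 := rfl
@[simp] lemma one_k : (1 : G).k = 0 := rfl

end G

namespace G

/-- powers of elements with `k = 0`. -/
lemma pow_azero (a : A) (n : ℕ) : (⟨a, 0⟩ : G) ^ n = ⟨(n : ℤ) • a, 0⟩ := by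
  induction n with
  | zero => ext <;> simp
  | succ n ih =>
      rw [pow_succ, ih, mul_def]
      ext
      · show (n:ℤ) • a + act 0 a = ((n:ℤ)+1) • a
        rw [act_zero_apply, add_zsmul, one_smul]
      · simp

lemma pow_k (g : G) (n : ℕ) : (g ^ n).k = (n : ℤ) * g.k := by
  induction n with
  | zero => simp
  | succ n ih => rw [pow_succ, mul_k, ih]; push_cast; ring

/-- every element of `A` is killed by a power of 3. -/
lemma exists_pow3_smul (a : A) : ∃ N : ℕ, ((3:ℤ)^N) • a = 0 := by
  obtain ⟨x, rfl⟩ := mk_surjective a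
  obtain ⟨N, hN⟩ := pow_unbounded_of_one_lt (R := ℝ) ‖x‖ (by norm_num : (1:ℝ) < 3)
  refine ⟨N, ?_⟩
  rw [← map_zsmul, mk_eq_zero]
  rw [zsmul_eq_mul]
  push_cast
  rw [norm_mul, norm_pow]
  rw [norm3]
  rw [inv_pow]
  rw [inv_mul_le_iff₀ (by positivity)]
  simpa using hN.le

/-- characterization of torsion elements. -/
lemma torsion_iff (g : G) : (∃ n : ℕ, 0 < n ∧ g ^ n = 1) ↔ g.k = 0 := by
  constructor
  · rintro ⟨n, hn, hgn⟩
    have := congrArg G.k hgn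
    rw [pow_k] at this
    simp only [one_k] at this
    rcases mul_eq_zero.1 this with h | h
    · exact absurd h (by exact_mod_cast hn.ne')
    · exact h
  · intro hk
    obtain ⟨N, hN⟩ := exists_pow3_smul g.a
    refine ⟨3^N, by positivity, ?_⟩
    have hg : g = ⟨g.a, 0⟩ := by
      ext
      · rfl
      · exact hk
    rw [hg, pow_azero]
    ext
    · show ((3^N : ℕ) : ℤ) • g.a = 0
      push_cast
      exact hN
    · rfl

end G

namespace G

instance : Infinite G :=
  Infinite.of_injective (fun k : ℤ => (⟨0, k⟩ : G)) (by
    intro k l h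
    exact congrArg G.k h)

open scoped commutatorElement in
lemma commutator_t (b : A) : ⁅(⟨b, 0⟩ : G), (⟨0, 1⟩ : G)⁆ = ⟨b - act 1 b, 0⟩ := by
  rw [commutatorElement_def]
  ext
  · simp [sub_eq_add_neg]
  · simp

open scoped commutatorElement in
lemma not_nilpotent : ¬ Group.IsNilpotent G := by
  intro hnil
  obtain ⟨n, hn⟩ := nilpotent_iff_lowerCentralSeries.1 hnil
  set c : K := (-3 : K) with hc
  set y : K := ((3:K)^(n+1))⁻¹ with hy
  -- the iterated commutators
  have key : ∀ j : ℕ, (⟨qmk (c^j * y), 0⟩ : G) ∈ (⊤ : Subgroup G).lowerCentralSeries j := by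
    intro j
    induction j with
    | zero => simp [lowerCentralSeries]
    | succ j ih =>
        have step : (⟨qmk (c^(j+1) * y), 0⟩ : G) = ⁅(⟨qmk (c^j * y), 0⟩ : G), (⟨0, 1⟩ : G)⁆ := by
          rw [commutator_t]
          ext
          · show qmk (c^(j+1)*y) = qmk (c^j*y) - act 1 (qmk (c^j*y))
            rw [act_mk, ← map_sub]
            congr 1
            rw [hc, zpow_one]
            ring
          · rfl
        rw [step, lowerCentralSeries_succ]
        exact Subgroup.commutator_mem_commutator ih (Subgroup.mem_top _)
  have h0 := key n
  rw [hn, Subgroup.mem_bot] at h0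
  have h1 : qmk (c^n * y) = 0 := congrArg G.a h0
  rw [mk_eq_zero] at h1
  rw [norm_mul, norm_pow, hc, norm_neg, norm3, hy, norm_inv, norm_pow, norm3] at h1
  simp only [inv_pow, inv_inv, pow_succ, ← mul_assoc] at h1
  have h4 : ((3:ℝ)^n)⁻¹ * (((3:ℝ)^n)⁻¹ * 3⁻¹)⁻¹ = 3 := by
    rw [mul_inv, inv_inv, inv_inv, ← mul_assoc,
      inv_mul_cancel₀ (by positivity : ((3:ℝ)^n) ≠ 0), one_mul]
  rw [h4] at h1
  norm_num at h1

end G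

namespace G

lemma split (a : A) (k : ℤ) : (⟨a, k⟩ : G) = (⟨a, 0⟩ : G) * (⟨0, k⟩ : G) := by
  ext
  · show a = a + act 0 0
    simp
  · show k = 0 + k
    ring

lemma act_nat_smul (n : ℕ) (a : A) : act (n : ℤ) a = ((4:ℤ)^n) • a := by
  induction n with
  | zero => simp
  | succ n ih =>
      have h1 : act ((n:ℤ)+1) a = act 1 (act (n:ℤ) a) := by rw [act_act]; ring_nf
      push_cast
      rw [h1, ih, act_one_eq, smul_smul, pow_succ]
      ring_nf

section Aut

variable (φ : G ≃* G)

lemma phi_k_zero (a : A) : (φ ⟨a, 0⟩).k = 0 := by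
  obtain ⟨n, hn, h⟩ := (torsion_iff (⟨a,0⟩ : G)).2 rfl
  exact (torsion_iff _).1 ⟨n, hn, by rw [← map_pow, h, map_one]⟩

/-- the restriction of `φ` to `A`. -/
def alph : A →+ A :=
  AddMonoidHom.mk' (fun a => (φ ⟨a, 0⟩).a) (by
    intro a b
    show (φ ⟨a+b, 0⟩).a = (φ ⟨a,0⟩).a + (φ ⟨b,0⟩).a
    have h1 : (⟨a+b, 0⟩ : G) = ⟨a,0⟩ * ⟨b,0⟩ := by
      ext
      · show a + b = a + act 0 b
        simp
      · show (0:ℤ) = 0 + 0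
        ring
    rw [h1, map_mul, mul_a, phi_k_zero]
    simp)

lemma phi_row (a : A) : φ ⟨a, 0⟩ = ⟨alph φ a, 0⟩ := by
  ext
  · rfl
  · exact phi_k_zero φ a

lemma alph_surj (b : A) : ∃ a : A, alph φ a = b := by
  refine ⟨(φ.symm ⟨b, 0⟩).a, ?_⟩
  have h1 : (⟨(φ.symm ⟨b, 0⟩).a, 0⟩ : G) = φ.symm ⟨b, 0⟩ := by
    ext
    · rfl
    · exact (phi_k_zero φ.symm b).symm
  show (φ ⟨(φ.symm ⟨b, 0⟩).a, 0⟩).a = b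
  rw [h1, MulEquiv.apply_symm_apply]

lemma phi_k_mul (g : G) : (φ g).k = g.k * (φ ⟨0,1⟩).k := by
  have hadd : ∀ k l : ℤ, (φ ⟨0, k + l⟩).k = (φ ⟨0,k⟩).k + (φ ⟨0,l⟩).k := by
    intro k l
    have h1 : (⟨0, k+l⟩ : G) = ⟨0,k⟩ * ⟨0,l⟩ := by
      ext
      · show (0:A) = 0 + act k 0
        simp
      · rfl
    rw [h1, map_mul, mul_k]
  set F : ℤ →+ ℤ := AddMonoidHom.mk' (fun k => (φ ⟨0,k⟩).k) hadd with hF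
  have hFk : ∀ k : ℤ, (φ ⟨0,k⟩).k = k * (φ ⟨0,1⟩).k := by
    intro k
    have : F k = k • F 1 := by rw [← map_zsmul F k (1:ℤ)]; norm_num
    simpa [hF, zsmul_eq_mul] using this
  calc (φ g).k = (φ (⟨g.a, 0⟩ * ⟨0, g.k⟩)).k := by
        rw [← split]
      _ = g.k * (φ ⟨0,1⟩).k := by
        rw [map_mul, mul_k, phi_k_zero, zero_add, hFk]

lemma eps_unit : (φ ⟨0,1⟩).k = 1 ∨ (φ ⟨0,1⟩).k = -1 := by
  have h1 : (φ (φ.symm ⟨0,1⟩)).k = 1 := by rw [MulEquiv.apply_symm_apply]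
  rw [phi_k_mul] at h1
  exact Int.isUnit_iff.1 (IsUnit.of_mul_eq_one _ (by rw [mul_comm]; exact h1))

lemma conj_rel (a : A) :
    alph φ (act 1 a) = act ((φ ⟨0,1⟩).k) (alph φ a) := by
  set e := (φ ⟨0,1⟩).k with he
  have hL : (⟨0,1⟩ : G) * ⟨a,0⟩ * (⟨0,1⟩ : G)⁻¹ = ⟨act 1 a, 0⟩ := by
    ext
    · show 0 + act 1 a + act (0+1) (-(act (-1) 0)) = act 1 a
      simp
    · show 0 + 1 + 0 + -1 = 0
      ring
  have hw : φ ⟨0,1⟩ = ⟨(φ ⟨0,1⟩).a, e⟩ := by ext <;> rfl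
  have hR : φ ⟨0,1⟩ * ⟨alph φ a, 0⟩ * (φ ⟨0,1⟩)⁻¹ = ⟨act e (alph φ a), 0⟩ := by
    set ca := (φ ⟨0,1⟩).a
    rw [hw]
    ext
    · show ca + act e (alph φ a) + act (e + 0) (-(act (-e) ca)) = act e (alph φ a)
      rw [map_neg, add_zero, act_act]
      simp
    · show e + 0 + -e = 0
      ring
  have hmain : φ ((⟨0,1⟩ : G) * ⟨a,0⟩ * (⟨0,1⟩ : G)⁻¹) = ⟨act e (alph φ a), 0⟩ := by
    rw [map_mul, map_mul, map_inv, phi_row, hR]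
  rw [hL, phi_row] at hmain
  have := congrArg G.a hmain
  exact this


lemma norm_pow3_inv (n : ℕ) : ‖((3:K)^n)⁻¹‖ = (3:ℝ)^n := by
  rw [norm_inv, norm_pow, norm3, inv_pow, inv_inv]

lemma eps_one : (φ ⟨0,1⟩).k = 1 := by
  rcases eps_unit φ with h | h
  · exact h
  exfalso
  -- with ε = -1 we get 15 • b = 0 for all b
  have h15 : ∀ b : A, (15:ℤ) • b = 0 := by
    intro b
    obtain ⟨a, rfl⟩ := alph_surj φ b
    have hc := conj_rel φ a
    rw [h] at hc
    rw [act_one_eq, map_zsmul] at hc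
    have h2 := congrArg (act 1) hc
    rw [act_act] at h2
    norm_num at h2
    rw [act_one_eq, smul_smul] at h2
    rw [show ((15:ℤ)) = 4*4 - 1 by norm_num, sub_smul, h2, one_smul, sub_self]
  -- contradiction with b = qmk (9⁻¹)
  have hb := h15 (qmk (((3:K)^2)⁻¹))
  rw [← map_zsmul, mk_eq_zero] at hb
  rw [zsmul_eq_mul] at hb
  push_cast at hb
  rw [show ((15:K)) = 3 * 5 by norm_num] at hb
  rw [mul_assoc, norm_mul, norm_mul, norm3, norm_pow3_inv] at hb
  have h5 : ‖(5 : K)‖ = 1 := by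
    have h1 : ‖((5:ℤ) : K)‖ ≤ 1 := Padic.norm_int_le_one 5
    have h2 : ¬ ‖((5:ℤ) : K)‖ < 1 := by
      rw [Padic.norm_intCast_lt_one_iff]; decide
    push_cast at h1 h2
    linarith
  rw [h5] at hb
  norm_num at hb

lemma alph_act (k : ℤ) (a : A) : alph φ (act k a) = act k (alph φ a) := by
  have h1 : ∀ a : A, alph φ (act 1 a) = act 1 (alph φ a) := by
    intro a
    have := conj_rel φ a
    rwa [eps_one φ] at this
  have hm1 : ∀ a : A, alph φ (act (-1) a) = act (-1) (alph φ a) := by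
    intro a
    have h2 := h1 (act (-1) a)
    rw [act_act] at h2
    norm_num at h2
    rw [h2, act_act]
    norm_num
  induction k using Int.induction_on with
  | zero => simp
  | succ k ih =>
      have e1 : act ((k:ℤ)+1) a = act 1 (act k a) := by rw [act_act]; ring_nf
      have e2 : act ((k:ℤ)+1) (alph φ a) = act 1 (act k (alph φ a)) := by
        rw [act_act]; ring_nf
      rw [e1, e2, h1, ih]
  | pred k ih =>
      have e1 : act (-(k:ℤ)-1) a = act (-1) (act (-k) a) := by rw [act_act]; ring_nf
      have e2 : act (-(k:ℤ)-1) (alph φ a) = act (-1) (act (-k) (alph φ a)) := by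
        rw [act_act]; ring_nf
      rw [e1, e2, hm1, ih]


lemma div3 (b : A) : ∃ b' : A, (3:ℤ) • b' = b := by
  obtain ⟨x, rfl⟩ := mk_surjective b
  refine ⟨qmk ((3:K)⁻¹ * x), ?_⟩
  rw [← map_zsmul, zsmul_eq_mul]
  push_cast
  rw [← mul_assoc, mul_inv_cancel₀ (by norm_num : (3:K) ≠ 0), one_mul]

lemma act_m1 (b : A) : ∃ u : ℤ, act (-1) b = u • b := by
  obtain ⟨N, hN⟩ := exists_pow3_smul b
  have hco : IsCoprime (4:ℤ) (3^N) := by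
    apply IsCoprime.pow_right
    rw [Int.isCoprime_iff_gcd_eq_one]
    decide
  obtain ⟨x, y, hxy⟩ := hco
  refine ⟨x, ?_⟩
  have h0 : (y * 3^N : ℤ) • b = 0 := by rw [mul_smul, hN, smul_zero]
  have hb : b = x • ((4:ℤ) • b) := by
    calc b = ((x*4 + y*3^N):ℤ) • b := by rw [hxy, one_smul]
      _ = (x*4:ℤ) • b + (y*3^N:ℤ) • b := by rw [add_zsmul]
      _ = x • ((4:ℤ) • b) := by rw [h0, add_zero, mul_smul]
  calc act (-1) b = act (-1) (x • ((4:ℤ) • b)) := by rw [← hb]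
    _ = x • act (-1) ((4:ℤ) • b) := by rw [map_zsmul]
    _ = x • b := by
        rw [← act_one_eq, act_act]
        norm_num

lemma act_zmul (k : ℤ) (b : A) : ∃ j : ℤ, act k b = j • b := by
  induction k using Int.induction_on with
  | zero => exact ⟨1, by simp⟩
  | succ k ih =>
      obtain ⟨j, hj⟩ := ih
      refine ⟨j * 4, ?_⟩
      have e1 : act ((k:ℤ)+1) b = act 1 (act (k:ℤ) b) := by rw [act_act]; ring_nf
      rw [e1, hj, map_zsmul, act_one_eq, smul_smul]
  | pred k ih =>
      obtain ⟨j, hj⟩ := ih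
      obtain ⟨u, hu⟩ := act_m1 b
      refine ⟨j * u, ?_⟩
      have e1 : act (-(k:ℤ)-1) b = act (-1) (act (-(k:ℤ)) b) := by rw [act_act]; ring_nf
      rw [e1, hj, map_zsmul, hu, smul_smul]


lemma S_mem (c' : A) (k : ℤ) : ∃ j : ℤ, c' - act k c' = j • ((3:ℤ) • c') := by
  induction k using Int.induction_on with
  | zero => exact ⟨0, by simp⟩
  | succ k ih =>
      obtain ⟨j, hj⟩ := ih
      obtain ⟨j', hj'⟩ := act_zmul (k:ℤ) c'
      refine ⟨j - j', ?_⟩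
      have e1 : act ((k:ℤ)+1) c' = act (k:ℤ) (act 1 c') := by rw [act_act]
      have e2 : c' - act ((k:ℤ)+1) c' = (c' - act (k:ℤ) c') + act (k:ℤ) (c' - act 1 c') := by
        rw [e1, map_sub]; abel
      have hx : act (k:ℤ) (c' - act 1 c') = (-j') • ((3:ℤ) • c') := by
        have h5 : c' - act 1 c' = (-1:ℤ) • ((3:ℤ) • c') := by
          rw [act_one_eq]
          module
        rw [h5, map_zsmul, map_zsmul, hj']
        module
      rw [e2, hj, hx]
      module
  | pred k ih =>
      obtain ⟨j, hj⟩ := ih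
      obtain ⟨j'', hj''⟩ := act_zmul (-(k:ℤ)-1) c'
      refine ⟨j + j'', ?_⟩
      have e1 : act (-(k:ℤ)) c' = act (-(k:ℤ)-1) (act 1 c') := by
        rw [act_act]
        ring_nf
      have e2 : c' - act (-(k:ℤ)-1) c' =
          (c' - act (-(k:ℤ)) c') + act (-(k:ℤ)-1) (act 1 c' - c') := by
        rw [e1, map_sub]; abel
      have hx : act (-(k:ℤ)-1) (act 1 c' - c') = j'' • ((3:ℤ) • c') := by
        have h4 : act 1 c' - c' = (3:ℤ) • c' := by
          rw [act_one_eq]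
          module
        rw [h4, map_zsmul, hj'']
        module
      rw [e2, hj, hx]
      module

lemma S_sur (c' : A) (j : ℤ) : ∃ k : ℤ, c' - act k c' = j • ((3:ℤ) • c') := by
  obtain ⟨N, h3N⟩ := exists_pow3_smul c'
  obtain ⟨m, hm⟩ := key_lemma N (1 - 3*j) ⟨-j, by ring⟩
  obtain ⟨w, hw⟩ := hm
  refine ⟨(m:ℤ), ?_⟩
  rw [act_nat_smul]
  have : c' - (4:ℤ)^m • c' = ((1:ℤ) - 4^m) • c' := by rw [sub_smul, one_smul]
  rw [this, smul_smul]
  rw [← sub_eq_zero, ← sub_smul]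
  have e4 : (1 - 4^m - j * 3 : ℤ) = (-w) * 3^N := by linarith [hw]
  rw [e4, mul_smul, h3N, smul_zero]


variable (c' : A)

lemma phi_t_pow (hc' : (3:ℤ) • c' = (φ ⟨0,1⟩).a) :
    ∀ k : ℤ, φ ⟨0, k⟩ = ⟨act k c' - c', k⟩ := by
  have hw : φ ⟨0,1⟩ = ⟨(3:ℤ) • c', 1⟩ := by
    ext
    · exact hc'.symm
    · exact eps_one φ
  have hsplit : ∀ k l : ℤ, (⟨0, k + l⟩ : G) = (⟨0,k⟩ : G) * ⟨0,l⟩ := by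
    intro k l
    ext
    · show (0:A) = 0 + act k 0
      simp
    · rfl
  have hwinv : φ ⟨0,-1⟩ = ⟨-(act (-1) ((3:ℤ) • c')), -1⟩ := by
    have h1 : (⟨0,-1⟩ : G) = (⟨0,1⟩ : G)⁻¹ := by
      ext
      · show (0:A) = -(act (-1) 0)
        simp
      · rfl
    rw [h1, map_inv, hw]
    ext
    · show -(act (-1) ((3:ℤ) • c')) = -(act (-1) ((3:ℤ) • c'))
      rfl
    · rfl
  intro k
  induction k using Int.induction_on with
  | zero =>
      rw [show (⟨0,(0:ℤ)⟩ : G) = 1 from rfl, map_one]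
      ext
      · show (0:A) = act 0 c' - c'
        simp
      · rfl
  | succ k ih =>
      rw [hsplit k 1, map_mul, ih, hw]
      ext
      · show act k c' - c' + act k ((3:ℤ) • c') = act ((k:ℤ)+1) c' - c'
        rw [map_zsmul]
        have e1 : act ((k:ℤ)+1) c' = (4:ℤ) • act (k:ℤ) c' := by
          rw [← act_one_eq, act_act]
          ring_nf
        rw [e1]
        module
      · rfl
  | pred k ih =>
      rw [show (-(k:ℤ) - 1) = (-(k:ℤ)) + (-1) by ring, hsplit (-(k:ℤ)) (-1), map_mul, ih, hwinv]
      ext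
      · show act (-(k:ℤ)) c' - c' + act (-(k:ℤ)) (-(act (-1) ((3:ℤ) • c'))) =
          act (-(k:ℤ) + -1) c' - c'
        rw [map_neg, act_act, map_zsmul]
        have e1 : act (-(k:ℤ)) c' = (4:ℤ) • act (-(k:ℤ) + -1) c' := by
          rw [← act_one_eq, act_act]
          ring_nf
        rw [e1]
        module
      · rfl

lemma phi_formula (hc' : (3:ℤ) • c' = (φ ⟨0,1⟩).a) (a : A) (k : ℤ) :
    φ ⟨a, k⟩ = ⟨alph φ a + (act k c' - c'), k⟩ := by
  rw [split, map_mul, phi_row, phi_t_pow φ c' hc' k]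
  ext
  · show alph φ a + act 0 (act k c' - c') = alph φ a + (act k c' - c')
    rw [act_zero_apply]
  · show (0:ℤ) + k = k
    ring

lemma twisted (hc' : (3:ℤ) • c' = (φ ⟨0,1⟩).a) (a : A) (k : ℤ) :
    (⟨a, k⟩ : G)⁻¹ * φ ⟨a, k⟩ =
      ⟨act (-k) (alph φ a - a) + (c' - act (-k) c'), 0⟩ := by
  rw [phi_formula φ c' hc']
  ext
  · show -(act (-k) a) + act (-k) (alph φ a + (act k c' - c')) =
      act (-k) (alph φ a - a) + (c' - act (-k) c')
    rw [map_add, map_sub, map_sub, act_act]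
    norm_num
    abel
  · show -k + k = 0
    ring


lemma main_aux (φ : G ≃* G) :
    ∃ H : Subgroup G, (H : Set G) = {g : G | ∃ a : G, g = a⁻¹ * φ a} := by
  obtain ⟨c', hc'⟩ := div3 ((φ ⟨0,1⟩).a)
  set Bs : AddSubgroup A := AddMonoidHom.range (alph φ - AddMonoidHom.id A) with hBs
  set Zs : AddSubgroup A := AddSubgroup.zmultiples ((3:ℤ) • c') with hZs
  refine ⟨{ carrier := {g : G | g.k = 0 ∧ g.a ∈ Bs ⊔ Zs}
            one_mem' := ⟨rfl, zero_mem _⟩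
            mul_mem' := ?_
            inv_mem' := ?_ }, ?_⟩
  · rintro g h ⟨hg1, hg2⟩ ⟨hh1, hh2⟩
    constructor
    · show g.k + h.k = 0
      rw [hg1, hh1]; ring
    · show g.a + act g.k h.a ∈ Bs ⊔ Zs
      rw [hg1, act_zero_apply]
      exact add_mem hg2 hh2
  · rintro g ⟨hg1, hg2⟩
    constructor
    · show -g.k = 0
      rw [hg1]; ring
    · show -(act (-g.k) g.a) ∈ Bs ⊔ Zs
      rw [hg1, neg_zero, act_zero_apply]
      exact neg_mem hg2
  · ext g
    simp only [Subgroup.coe_set_mk, Set.mem_setOf_eq]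
    constructor
    · rintro ⟨hk, ha⟩
      rw [AddSubgroup.mem_sup] at ha
      obtain ⟨b, hb, z, hz, hbz⟩ := ha
      obtain ⟨a', ha'⟩ := hb
      rw [AddSubgroup.mem_zmultiples_iff] at hz
      obtain ⟨j, hj⟩ := hz
      obtain ⟨k0, hk0⟩ := S_sur c' j
      refine ⟨⟨act (-k0) a', -k0⟩, ?_⟩
      rw [twisted φ c' hc']
      ext
      · show g.a = act (-(-k0)) (alph φ (act (-k0) a') - act (-k0) a')
          + (c' - act (-(-k0)) c')
        rw [neg_neg, alph_act, ← map_sub, act_act]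
        norm_num
        rw [hk0, hj]
        rw [← hbz]
        have hb' : alph φ a' - a' = b := by
          rw [← ha']
          simp [AddMonoidHom.sub_apply]
        rw [hb']
      · exact hk
    · rintro ⟨h, rfl⟩
      have ht := twisted φ c' hc' h.a h.k
      have hh : (⟨h.a, h.k⟩ : G) = h := by ext <;> rfl
      rw [hh] at ht
      rw [ht]
      constructor
      · rfl
      · show act (-h.k) (alph φ h.a - h.a) + (c' - act (-h.k) c') ∈ Bs ⊔ Zs
        apply add_mem
        · apply AddSubgroup.mem_sup_left
          refine ⟨act (-h.k) h.a, ?_⟩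
          show alph φ (act (-h.k) h.a) - act (-h.k) h.a = _
          rw [alph_act, ← map_sub]
        · apply AddSubgroup.mem_sup_right
          obtain ⟨j, hj⟩ := S_mem c' (-h.k)
          rw [hj]
          exact AddSubgroup.zsmul_mem _ (AddSubgroup.mem_zmultiples _) j

end Aut
end G
end TwistEx

/-- There exists an infinite non-nilpotent group `G` such that for every automorphism `φ`
of `G` the set `{g⁻¹ φ(g) | g ∈ G}` is a subgroup of `G`. -/
theorem exists_infinite_nonnilpotent_with_twisted_subgroups :
    ∃ (G : Type) (_ : Group G), Infinite G ∧ ¬ Group.IsNilpotent G ∧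
      ∀ φ : G ≃* G, ∃ H : Subgroup G, (H : Set G) = {g : G | ∃ a : G, g = a⁻¹ * φ a} := by
  exact ⟨TwistEx.G, inferInstance, inferInstance, TwistEx.G.not_nilpotent,
    fun φ => TwistEx.G.main_aux φ⟩
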